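/- Let T be a finite set of primes with |T| = t ≥ 1, let p̃ be the smallest prime in T, let a be an integer not divisible by any prime in T, and let d be any integer. Then for every positive integer n, the number of integers in the set {d, a + d, 2a + d, …, (n−1)a + d} that are not divisible by any prime in T is at least n(p̃ − 1)/(p̃ + t − 1) − 2^t + 1. -/

import Mathlib

open Finset

lemma countmod (m r : ℕ) (hm : 0 < m) (hr : r < m) :
    ∀ n : ℕ, ((range n).filter (fun j => j % m = r)).card = (n + (m - 1 - r)) / m := by
  intro n
  induction n with
  | zero => simp [Nat.div_eq_of_lt (by omega : m - 1 - r < m)]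
  | succ n ih =>
      rw [range_add_one, filter_insert]
      have key : (m ∣ n + (m - 1 - r) + 1) ↔ n % m = r := by
        constructor
        · rintro ⟨q, hq⟩
          have hq1 : q ≠ 0 := by rintro rfl; simp at hq
          obtain ⟨q', rfl⟩ := Nat.exists_eq_succ_of_ne_zero hq1
          rw [Nat.mul_succ] at hq
          have h3 : n = m * q' + r := by omega
          rw [h3, Nat.mul_add_mod, Nat.mod_eq_of_lt hr]
        · intro h
          have h1 := Nat.div_add_mod n m
          refine ⟨n / m + 1, ?_⟩
          rw [Nat.mul_succ]
          omega
      rcases eq_or_ne (n % m) r with h | h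
      · rw [if_pos h, card_insert_of_notMem (by simp), ih,
          show n + 1 + (m - 1 - r) = n + (m - 1 - r) + 1 from by ring,
          Nat.succ_div_of_dvd (key.2 h)]
      · rw [if_neg h, ih,
          show n + 1 + (m - 1 - r) = n + (m - 1 - r) + 1 from by ring,
          Nat.succ_div_of_not_dvd (fun hd => h (key.1 hd))]

lemma countbounds (m r n : ℕ) (hm : 0 < m) (hr : r < m) :
    m * ((range n).filter (fun j => j % m = r)).card ≤ n + m ∧
      n < m * ((range n).filter (fun j => j % m = r)).card + m := by
  rw [countmod m r hm hr n]
  have h0 := Nat.div_mul_le_self (n + (m - 1 - r)) m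
  rw [mul_comm] at h0
  have h1 := Nat.div_add_mod (n + (m - 1 - r)) m
  have h2 := Nat.mod_lt (n + (m - 1 - r)) hm
  omega

lemma residue (m : ℕ) (hm : 0 < m) (a d : ℤ) (hcop : IsCoprime a (m : ℤ)) :
    ∃ r < m, ∀ j : ℕ, ((m : ℤ) ∣ ((j : ℤ) * a + d)) ↔ j % m = r := by
  haveI : NeZero m := ⟨hm.ne'⟩
  obtain ⟨u, v, huv⟩ := hcop
  have hunit : IsUnit ((a : ZMod m)) := by
    refine IsUnit.of_mul_eq_one ((u : ℤ) : ZMod m) ?_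
    have : (((u * a + v * m : ℤ)) : ZMod m) = ((1 : ℤ) : ZMod m) := by rw [huv]
    push_cast at this
    rw [ZMod.natCast_self] at this
    linear_combination this
  set w := hunit.unit
  set x : ZMod m := (-(d : ZMod m)) * ↑w⁻¹ with hx
  refine ⟨x.val, x.val_lt, fun j => ?_⟩
  rw [← ZMod.intCast_zmod_eq_zero_iff_dvd]
  have hcast : (((j : ℤ) * a + d : ℤ) : ZMod m) = (j : ZMod m) * (a : ZMod m) + (d : ZMod m) := by
    push_cast; ring
  rw [hcast]
  have hw : (w : ZMod m) = (a : ZMod m) := hunit.unit_spec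
  constructor
  · intro h
    have hj : (j : ZMod m) = x := by
      rw [hx, Units.eq_mul_inv_iff_mul_eq]
      · rw [hw]; linear_combination h
    have := congrArg ZMod.val hj
    rwa [ZMod.val_natCast] at this
  · intro h
    have hj : (j : ZMod m) = x := by
      have : ((j % m : ℕ) : ZMod m) = ((x.val : ℕ) : ZMod m) := by rw [h]
      rwa [ZMod.natCast_val, ZMod.natCast_mod, ZMod.cast_id] at this
    rw [hj, hx, ← hw]
    have : -(d : ZMod m) * ↑w⁻¹ * ↑w = -d := by
      rw [mul_assoc, w.inv_mul, mul_one]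
    rw [this]; ring

lemma prodlb (q : ℕ) (hq : 2 ≤ q) :
    ∀ F : Finset ℕ, (∀ x ∈ F, q ≤ x) →
      ((q : ℚ) - 1) / ((q : ℚ) + (F.card : ℚ) - 1) ≤ ∏ x ∈ F, (1 - 1 / (x : ℚ)) := by
  intro F
  induction F using Finset.strongInduction with
  | _ F ih =>
    intro hF
    have hq2 : (2:ℚ) ≤ (q:ℚ) := by exact_mod_cast hq
    rcases F.eq_empty_or_nonempty with rfl | hne
    · simp only [card_empty, Nat.cast_zero, prod_empty, add_zero]
      rw [div_self (by linarith : (q:ℚ) - 1 ≠ 0)]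
    · set M := F.max' hne with hM
      have hMF : M ∈ F := F.max'_mem hne
      have hqM : q ≤ M := hF M hMF
      have hsub : F ⊆ Finset.Icc q M := fun x hx =>
        Finset.mem_Icc.mpr ⟨hF x hx, F.le_max' x hx⟩
      have hcard : F.card ≤ M + 1 - q := by
        have := Finset.card_le_card hsub
        rwa [Nat.card_Icc] at this
      have hk1 : 1 ≤ F.card := card_pos.mpr hne
      have hMbound : q + F.card ≤ M + 1 := by omega
      have hcarde : (F.erase M).card = F.card - 1 := card_erase_of_mem hMF
      have ihe := ih (F.erase M) (erase_ssubset hMF) (fun x hx => hF x (mem_of_mem_erase hx))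
      rw [hcarde] at ihe
      have hprod : ∏ x ∈ F, (1 - 1/(x:ℚ)) =
          (1 - 1/(M:ℚ)) * ∏ x ∈ F.erase M, (1 - 1/(x:ℚ)) := by
        exact (Finset.mul_prod_erase F _ hMF).symm
      rw [hprod]
      set k := F.card with hkdef
      have hkc : ((k - 1 : ℕ) : ℚ) = (k : ℚ) - 1 := by
        push_cast [Nat.cast_sub hk1]; ring
      rw [hkc] at ihe
      have hMQ : (q : ℚ) + k - 1 ≤ (M : ℚ) := by
        have := (Nat.cast_le (α := ℚ)).mpr hMbound
        push_cast at this; linarith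
      have hk2 : (1:ℚ) ≤ (k:ℚ) := by exact_mod_cast hk1
      have hd1 : (0:ℚ) < (q:ℚ) + (k:ℚ) - 1 := by linarith
      have hd2 : (0:ℚ) < (q:ℚ) + ((k:ℚ) - 1) - 1 := by linarith
      have hM0 : (0:ℚ) < (M:ℚ) := by
        have : (0:ℕ) < M := by omega
        exact_mod_cast this
      have hfac : (0:ℚ) ≤ 1 - 1/(M:ℚ) := by
        rw [sub_nonneg, div_le_one hM0]; linarith
      calc ((q:ℚ) - 1) / ((q:ℚ) + (k:ℚ) - 1)
          ≤ (1 - 1/(M:ℚ)) * (((q:ℚ) - 1) / ((q:ℚ) + ((k:ℚ) - 1) - 1)) := by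
            rw [show (1 - 1/(M:ℚ)) = ((M:ℚ)-1)/(M:ℚ) from by field_simp,
              div_mul_div_comm, div_le_div_iff₀ hd1 (by positivity)]
            nlinarith [mul_nonneg (by linarith : (0:ℚ) ≤ (q:ℚ)-1)
              (by linarith : (0:ℚ) ≤ (M:ℚ) - ((q:ℚ)+(k:ℚ)-1))]
        _ ≤ (1 - 1/(M:ℚ)) * ∏ x ∈ F.erase M, (1 - 1/(x:ℚ)) :=
            mul_le_mul_of_nonneg_left ihe hfac

lemma crtdvd (S : Finset ℕ) (hS : ∀ p ∈ S, p.Prime) (x : ℤ) :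
    ((∏ p ∈ S, (p : ℤ)) ∣ x) ↔ ∀ p ∈ S, (p : ℤ) ∣ x := by
  constructor
  · exact fun h p hp => dvd_trans (Finset.dvd_prod_of_mem _ hp) h
  · intro h
    refine Finset.prod_dvd_of_coprime ?_ h
    intro p hp p' hp' hpp
    exact Nat.isCoprime_iff_coprime.mpr ((Nat.coprime_primes (hS p hp) (hS p' hp')).mpr hpp)

lemma incl_excl (T : Finset ℕ) (hT : ∀ p ∈ T, p.Prime) (a d : ℤ) (n : ℕ) :
    ((((range n).filter (fun j : ℕ => ∀ p ∈ T, ¬ ((p : ℤ) ∣ ((j:ℤ) * a + d)))).card : ℚ))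
      = ∑ S ∈ T.powerset, (-1 : ℚ) ^ S.card *
          ((((range n).filter (fun j : ℕ => ((∏ p ∈ S, (p:ℤ)) ∣ ((j:ℤ) * a + d)))).card : ℚ)) := by
  classical
  have step1 : ∀ j : ℕ,
      (if (∀ p ∈ T, ¬ ((p : ℤ) ∣ ((j:ℤ) * a + d))) then (1:ℚ) else 0)
        = ∑ S ∈ T.powerset, (-1:ℚ)^S.card *
            (if ((∏ p ∈ S, (p:ℤ)) ∣ ((j:ℤ) * a + d)) then (1:ℚ) else 0) := by
    intro j
    have hb : (∏ p ∈ T, (if ¬ ((p : ℤ) ∣ ((j:ℤ) * a + d)) then (1:ℚ) else 0))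
        = (if (∀ p ∈ T, ¬ ((p : ℤ) ∣ ((j:ℤ) * a + d))) then (1:ℚ) else 0) :=
      Finset.prod_boole
    rw [← hb]
    have h1 : ∀ p ∈ T, (if ¬ ((p : ℤ) ∣ ((j:ℤ) * a + d)) then (1:ℚ) else 0)
        = (-(if ((p : ℤ) ∣ ((j:ℤ) * a + d)) then (1:ℚ) else 0)) + 1 := by
      intro p _; split_ifs <;> simp
    rw [Finset.prod_congr rfl h1, Finset.prod_add]
    refine Finset.sum_congr rfl (fun S hS => ?_)
    rw [Finset.prod_const_one, mul_one]
    have h2 : ∏ p ∈ S, (-(if ((p : ℤ) ∣ ((j:ℤ) * a + d)) then (1:ℚ) else 0))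
        = (-1:ℚ)^S.card * ∏ p ∈ S, (if ((p : ℤ) ∣ ((j:ℤ) * a + d)) then (1:ℚ) else 0) := by
      have hd := Finset.prod_mul_distrib (s := S) (f := fun _ : ℕ => (-1:ℚ))
        (g := fun p : ℕ => if ((p : ℤ) ∣ ((j:ℤ) * a + d)) then (1:ℚ) else 0)
      rw [Finset.prod_const] at hd
      rw [← hd]
      exact Finset.prod_congr rfl fun p _ => by ring
    rw [h2]
    congr 1
    rw [Finset.prod_boole]
    exact if_congr (crtdvd S (fun p hp => hT p (Finset.mem_powerset.mp hS hp)) _).symm rfl rfl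
  rw [Finset.card_filter]
  push_cast
  calc (∑ j ∈ range n, if (∀ p ∈ T, ¬ ((p : ℤ) ∣ ((j:ℤ) * a + d))) then (1:ℚ) else 0)
      = ∑ j ∈ range n, ∑ S ∈ T.powerset, (-1:ℚ)^S.card *
          (if ((∏ p ∈ S, (p:ℤ)) ∣ ((j:ℤ) * a + d)) then (1:ℚ) else 0) :=
        Finset.sum_congr rfl (fun j _ => step1 j)
    _ = ∑ S ∈ T.powerset, ∑ j ∈ range n, (-1:ℚ)^S.card *
          (if ((∏ p ∈ S, (p:ℤ)) ∣ ((j:ℤ) * a + d)) then (1:ℚ) else 0) := Finset.sum_comm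
    _ = ∑ S ∈ T.powerset, (-1 : ℚ) ^ S.card *
          ((((range n).filter (fun j : ℕ => ((∏ p ∈ S, (p:ℤ)) ∣ ((j:ℤ) * a + d)))).card : ℚ)) := by
        refine Finset.sum_congr rfl (fun S _ => ?_)
        rw [← Finset.mul_sum, Finset.card_filter]
        push_cast
        rfl

lemma id2 (T : Finset ℕ) (hT : ∀ p ∈ T, 0 < p) (n : ℕ) :
    (n:ℚ) * ∏ p ∈ T, (1 - 1/(p:ℚ))
      = ∑ S ∈ T.powerset, (-1:ℚ)^S.card * ((n:ℚ)/((∏ p ∈ S, p : ℕ):ℚ)) := by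
  classical
  have h1 : ∀ p ∈ T, (1 - 1/(p:ℚ)) = (-(1/(p:ℚ))) + 1 := fun p _ => by ring
  rw [Finset.prod_congr rfl h1, Finset.prod_add, Finset.mul_sum]
  refine Finset.sum_congr rfl (fun S hS => ?_)
  rw [Finset.prod_const_one, mul_one]
  have hd := Finset.prod_mul_distrib (s := S) (f := fun _ : ℕ => (-1:ℚ))
    (g := fun p : ℕ => 1/(p:ℚ))
  rw [Finset.prod_const] at hd
  have h2 : ∏ p ∈ S, (-(1/(p:ℚ))) = (-1:ℚ)^S.card * ∏ p ∈ S, (1/(p:ℚ)) := by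
    rw [← hd]; exact Finset.prod_congr rfl fun p _ => by ring
  have h3 : ((∏ p ∈ S, p : ℕ):ℚ) = ∏ p ∈ S, (p:ℚ) := by push_cast; rfl
  rw [h2, h3]
  rw [show (∏ p ∈ S, (1/(p:ℚ))) = (∏ p ∈ S, (p:ℚ))⁻¹ by
    rw [← Finset.prod_inv_distrib]; exact Finset.prod_congr rfl fun p _ => one_div _]
  field_simp


lemma termbound (T : Finset ℕ) (hT : ∀ p ∈ T, p.Prime) (a d : ℤ)
    (ha : ∀ p ∈ T, ¬ ((p : ℤ) ∣ a)) (n : ℕ) (S : Finset ℕ) (hS : S ⊆ T) :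
    |((((range n).filter (fun j : ℕ => ((∏ p ∈ S, (p:ℤ)) ∣ ((j:ℤ) * a + d)))).card : ℚ))
      - (n:ℚ)/((∏ p ∈ S, p : ℕ):ℚ)| ≤ 1 := by
  classical
  set m := ∏ p ∈ S, p with hmdef
  have hm : 0 < m := Finset.prod_pos (fun p hp => (hT p (hS hp)).pos)
  have hcast : (∏ p ∈ S, (p:ℤ)) = ((m:ℕ):ℤ) := by rw [hmdef]; push_cast; rfl
  have hcop : IsCoprime a ((m:ℕ):ℤ) := by
    rw [hmdef]
    push_cast
    exact IsCoprime.prod_right fun p hp =>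
      ((Nat.prime_iff_prime_int.mp (hT p (hS hp))).coprime_iff_not_dvd.mpr (ha p (hS hp))).symm
  obtain ⟨r, hr, hiff⟩ := residue m hm a d hcop
  have hfe : (range n).filter (fun j : ℕ => ((∏ p ∈ S, (p:ℤ)) ∣ ((j:ℤ) * a + d)))
      = (range n).filter (fun j : ℕ => j % m = r) := by
    apply Finset.filter_congr
    intro j _
    rw [hcast]
    exact_mod_cast (hiff j)
  rw [hfe]
  obtain ⟨hub, hlb⟩ := countbounds m r n hm hr
  set c := ((range n).filter (fun j : ℕ => j % m = r)).card
  have hmQ : (0:ℚ) < (m:ℚ) := by exact_mod_cast hm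
  have hubQ : (m:ℚ) * (c:ℚ) ≤ (n:ℚ) + (m:ℚ) := by exact_mod_cast hub
  have hlbQ : (n:ℚ) < (m:ℚ) * (c:ℚ) + (m:ℚ) := by exact_mod_cast hlb
  rw [abs_sub_le_iff]
  constructor
  · rw [sub_le_iff_le_add]
    have : (c:ℚ) ≤ ((n:ℚ) + (m:ℚ))/(m:ℚ) := by
      rw [le_div_iff₀ hmQ, mul_comm]; exact hubQ
    rw [add_div, div_self hmQ.ne'] at this
    linarith
  · rw [sub_le_iff_le_add]
    have : (n:ℚ)/(m:ℚ) < (c:ℚ) + 1 := by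
      rw [div_lt_iff₀ hmQ, add_mul, one_mul, mul_comm]
      linarith
    linarith

theorem stmt_6 (T : Finset ℕ) (hT : ∀ p ∈ T, p.Prime) (hne : T.Nonempty)
    (a d : ℤ) (ha : ∀ p ∈ T, ¬ ((p : ℤ) ∣ a)) (n : ℕ) (hn : 0 < n) :
    ((n : ℚ) * ((T.min' hne : ℚ) - 1) / ((T.min' hne : ℚ) + (T.card : ℚ) - 1)
        - 2 ^ T.card + 1)
      ≤ (({j : ℕ | j < n ∧ ∀ p ∈ T, ¬ ((p : ℤ) ∣ ((j : ℤ) * a + d))}.ncard : ℚ)) := by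
  classical
  -- convert ncard to Finset card
  have hset : {j : ℕ | j < n ∧ ∀ p ∈ T, ¬ ((p : ℤ) ∣ ((j : ℤ) * a + d))}
      = ↑((range n).filter (fun j : ℕ => ∀ p ∈ T, ¬ ((p : ℤ) ∣ ((j:ℤ) * a + d)))) := by
    ext j; simp [Set.mem_setOf_eq, Finset.mem_filter, Finset.mem_range]
  rw [hset, Set.ncard_coe_finset]
  set good := ((range n).filter (fun j : ℕ => ∀ p ∈ T, ¬ ((p : ℤ) ∣ ((j:ℤ) * a + d)))).card
  have hIE := incl_excl T hT a d n
  have hI2 := id2 T (fun p hp => (hT p hp).pos) n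
  -- difference bound
  have hdiff : (good:ℚ) - (n:ℚ) * ∏ p ∈ T, (1 - 1/(p:ℚ))
      = ∑ S ∈ T.powerset, (-1:ℚ)^S.card *
          ((((range n).filter (fun j : ℕ => ((∏ p ∈ S, (p:ℤ)) ∣ ((j:ℤ) * a + d)))).card : ℚ)
            - (n:ℚ)/((∏ p ∈ S, p : ℕ):ℚ)) := by
    rw [hIE, hI2, ← Finset.sum_sub_distrib]
    exact Finset.sum_congr rfl fun S _ => by ring
  have hbound : ∑ S ∈ T.powerset, (if S = (∅ : Finset ℕ) then (0:ℚ) else -1)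
      ≤ (good:ℚ) - (n:ℚ) * ∏ p ∈ T, (1 - 1/(p:ℚ)) := by
    rw [hdiff]
    refine Finset.sum_le_sum (fun S hS => ?_)
    rcases eq_or_ne S (∅ : Finset ℕ) with rfl | hSne
    · rw [if_pos rfl]
      have h0 : ((range n).filter (fun j : ℕ => ((∏ p ∈ (∅ : Finset ℕ), (p:ℤ)) ∣ ((j:ℤ) * a + d)))).card = n := by
        rw [Finset.filter_true_of_mem (fun j _ => by simp), Finset.card_range]
      rw [h0]
      simp
    · rw [if_neg hSne]
      have habs := termbound T hT a d ha n S (Finset.mem_powerset.mp hS)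
      set x : ℚ := (((range n).filter (fun j : ℕ => ((∏ p ∈ S, (p:ℤ)) ∣ ((j:ℤ) * a + d)))).card : ℚ)
            - (n:ℚ)/((∏ p ∈ S, p : ℕ):ℚ)
      have h1 : |(-1:ℚ)^S.card * x| = |x| := by
        rw [abs_mul, abs_pow, abs_neg, abs_one, one_pow, one_mul]
      have h2 := neg_abs_le ((-1:ℚ)^S.card * x)
      rw [h1] at h2
      linarith [abs_nonneg x]
  -- value of the error sum
  have hsum : ∑ S ∈ T.powerset, (if S = (∅ : Finset ℕ) then (0:ℚ) else -1)
      = -(2:ℚ)^T.card + 1 := by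
    have : ∀ S ∈ T.powerset, (if S = (∅ : Finset ℕ) then (0:ℚ) else -1)
        = -1 + (if S = (∅ : Finset ℕ) then (1:ℚ) else 0) := by
      intro S _; split_ifs <;> ring
    rw [Finset.sum_congr rfl this, Finset.sum_add_distrib, Finset.sum_const,
      Finset.card_powerset, Finset.sum_ite_eq' T.powerset (∅ : Finset ℕ) (fun _ => (1:ℚ)),
      if_pos (Finset.empty_mem_powerset T)]
    push_cast
    ring
  -- product lower bound
  set q := T.min' hne with hq
  have hq2 : 2 ≤ q := (hT q (T.min'_mem hne)).two_le
  have hPB := prodlb q hq2 T (fun x hx => T.min'_le x hx)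
  have hn0 : (0:ℚ) ≤ (n:ℚ) := by positivity
  have hC : (n:ℚ) * (((q:ℚ) - 1) / ((q:ℚ) + (T.card : ℚ) - 1)) ≤ (n:ℚ) * ∏ p ∈ T, (1 - 1/(p:ℚ)) :=
    mul_le_mul_of_nonneg_left hPB hn0
  rw [mul_div_assoc]
  linarith [hbound, hsum.symm ▸ hbound]
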